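/- Let A_1 = [[−1/√2, −1/2 − i/2], [−1/2 + i/2, 1/√2]], A_2 = [[1/2 + i/2, 1/√2], [−1/√2, 1/2 − i/2]], A_3 = [[1/2 − i/2, i/√2], [i/√2, 1/2 + i/2]] be the given 2×2 complex matrices (each is unitary). Then: (i) for all (z_0, z_1, z_2, z_3) ∈ ℂ^4, det(z_0 I + z_1A_1 + z_2A_2 + z_3A_3) = det(z_0 I − z_1A_1 + z_2A_2 + z_3A_3) = z_0² + z_0(z_2 + z_3) − z_1² + z_2² + z_3²; and (ii) there exists no unitary 2×2 matrix U such that UA_1U* = −A_1, UA_2U* = A_2, and UA_3U* = A_3. -/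

import Mathlib

open Matrix Complex

noncomputable def A₁ : Matrix (Fin 2) (Fin 2) ℂ :=
  !![-(1 / (Real.sqrt 2 : ℂ)), -(1 / 2) - I / 2;
     -(1 / 2) + I / 2, 1 / (Real.sqrt 2 : ℂ)]

noncomputable def A₂ : Matrix (Fin 2) (Fin 2) ℂ :=
  !![1 / 2 + I / 2, 1 / (Real.sqrt 2 : ℂ);
     -(1 / (Real.sqrt 2 : ℂ)), 1 / 2 - I / 2]

noncomputable def A₃ : Matrix (Fin 2) (Fin 2) ℂ :=
  !![1 / 2 - I / 2, I / (Real.sqrt 2 : ℂ);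
     I / (Real.sqrt 2 : ℂ), 1 / 2 + I / 2]


section Aux

private lemma hs_aux : (Real.sqrt 2 : ℂ) * (Real.sqrt 2 : ℂ) = 2 := by
  rw [← Complex.ofReal_mul, Real.mul_self_sqrt (by norm_num)]; norm_num

private lemma hs0_aux : (Real.sqrt 2 : ℂ) ≠ 0 := by
  intro h; have hs := hs_aux; rw [h] at hs; simp at hs

private lemma hr_aux : Real.sqrt 2 * Real.sqrt 2 = 2 := Real.mul_self_sqrt (by norm_num)

private lemma hr0_aux : Real.sqrt 2 ≠ 0 := by positivity

set_option maxHeartbeats 800000 in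
private lemma aux_u1 : A₁ ∈ Matrix.unitaryGroup (Fin 2) ℂ := by
  have hs := hs_aux; have hs0 := hs0_aux
  have hr := hr_aux; have hr0 := hr0_aux
  rw [Matrix.mem_unitaryGroup_iff]
  ext i j
  fin_cases i <;> fin_cases j <;>
    simp [A₁, Matrix.mul_apply, Fin.sum_univ_two, star, Matrix.conjTranspose_apply,
      Matrix.one_apply] <;>
    field_simp <;> ring_nf <;> simp [Complex.ext_iff] <;> ring_nf <;>
    simp [hr0] <;> field_simp <;> nlinarith [hr0_aux, hr_aux, Real.sqrt_nonneg 2]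

set_option maxHeartbeats 800000 in
private lemma aux_u2 : A₂ ∈ Matrix.unitaryGroup (Fin 2) ℂ := by
  have hs := hs_aux; have hs0 := hs0_aux
  have hr := hr_aux; have hr0 := hr0_aux
  rw [Matrix.mem_unitaryGroup_iff]
  ext i j
  fin_cases i <;> fin_cases j <;>
    simp [A₂, Matrix.mul_apply, Fin.sum_univ_two, star, Matrix.conjTranspose_apply,
      Matrix.one_apply] <;>
    field_simp <;> ring_nf <;> simp [Complex.ext_iff] <;> ring_nf <;>
    simp [hr0] <;> field_simp <;> nlinarith [hr0_aux, hr_aux, Real.sqrt_nonneg 2]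

set_option maxHeartbeats 800000 in
private lemma aux_u3 : A₃ ∈ Matrix.unitaryGroup (Fin 2) ℂ := by
  have hs := hs_aux; have hs0 := hs0_aux
  have hr := hr_aux; have hr0 := hr0_aux
  rw [Matrix.mem_unitaryGroup_iff]
  ext i j
  fin_cases i <;> fin_cases j <;>
    simp [A₃, Matrix.mul_apply, Fin.sum_univ_two, star, Matrix.conjTranspose_apply,
      Matrix.one_apply] <;>
    field_simp <;> ring_nf <;> simp [Complex.ext_iff] <;> ring_nf <;>
    field_simp <;> norm_num <;> nlinarith [hr0_aux, hr_aux, Real.sqrt_nonneg 2]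

set_option maxHeartbeats 800000 in
private lemma aux_det (z₀ z₁ z₂ z₃ : ℂ) :
    (z₀ • (1 : Matrix (Fin 2) (Fin 2) ℂ) + z₁ • A₁ + z₂ • A₂ + z₃ • A₃).det =
      z₀ ^ 2 + z₀ * (z₂ + z₃) - z₁ ^ 2 + z₂ ^ 2 + z₃ ^ 2 ∧
    (z₀ • (1 : Matrix (Fin 2) (Fin 2) ℂ) - z₁ • A₁ + z₂ • A₂ + z₃ • A₃).det =
      z₀ ^ 2 + z₀ * (z₂ + z₃) - z₁ ^ 2 + z₂ ^ 2 + z₃ ^ 2 := by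
  have hs := hs_aux; have hs0 := hs0_aux
  have h2 : (Real.sqrt 2 : ℂ) ^ 2 = 2 := by rw [sq]; exact hs
  have h4 : (Real.sqrt 2 : ℂ) ^ 4 = 4 := by
    rw [show (Real.sqrt 2 : ℂ) ^ 4 = ((Real.sqrt 2 : ℂ) ^ 2) ^ 2 by ring, h2]; norm_num
  have h6 : (Real.sqrt 2 : ℂ) ^ 6 = 8 := by
    rw [show (Real.sqrt 2 : ℂ) ^ 6 = ((Real.sqrt 2 : ℂ) ^ 2) ^ 3 by ring, h2]; norm_num
  have hinv6 : ((Real.sqrt 2 : ℂ))⁻¹ ^ 6 = 1 / 8 := by rw [inv_pow, h6]; norm_num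
  constructor
  · rw [Matrix.det_fin_two]
    simp [A₁, A₂, A₃, Matrix.one_apply]
    field_simp
    ring_nf
    simp only [hinv6, h6, h4, h2, Complex.I_sq]
    ring_nf
  · rw [Matrix.det_fin_two]
    simp [A₁, A₂, A₃, Matrix.one_apply]
    field_simp
    ring_nf
    simp only [hinv6, h6, h4, h2, Complex.I_sq]
    ring_nf

set_option maxHeartbeats 800000 in
private lemma aux_no_unitary : ¬ ∃ U : Matrix (Fin 2) (Fin 2) ℂ,
    U ∈ Matrix.unitaryGroup (Fin 2) ℂ ∧
      U * A₁ * Uᴴ = -A₁ ∧ U * A₂ * Uᴴ = A₂ ∧ U * A₃ * Uᴴ = A₃ := by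
  have hs := hs_aux; have hs0 := hs0_aux
  rintro ⟨U, hU, h1, h2', h3⟩
  have hUl : Uᴴ * U = 1 := Matrix.mem_unitaryGroup_iff'.mp hU
  have c1 : U * A₁ = -A₁ * U := by
    calc U * A₁ = U * A₁ * (Uᴴ * U) := by rw [hUl, mul_one]
    _ = (U * A₁ * Uᴴ) * U := by rw [Matrix.mul_assoc, Matrix.mul_assoc, Matrix.mul_assoc]
    _ = -A₁ * U := by rw [h1]
  have c2 : U * A₂ = A₂ * U := by
    calc U * A₂ = U * A₂ * (Uᴴ * U) := by rw [hUl, mul_one]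
    _ = (U * A₂ * Uᴴ) * U := by rw [Matrix.mul_assoc, Matrix.mul_assoc, Matrix.mul_assoc]
    _ = A₂ * U := by rw [h2']
  have c3 : U * A₃ = A₃ * U := by
    calc U * A₃ = U * A₃ * (Uᴴ * U) := by rw [hUl, mul_one]
    _ = (U * A₃ * Uᴴ) * U := by rw [Matrix.mul_assoc, Matrix.mul_assoc, Matrix.mul_assoc]
    _ = A₃ * U := by rw [h3]
  have e3 := congrFun (congrFun c3 0) 0
  have e2 := congrFun (congrFun c2 0) 0
  simp [Matrix.mul_apply, Fin.sum_univ_two, A₂, A₃] at e2 e3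
  field_simp at e2 e3
  have hc : U 1 0 = -U 0 1 := by linear_combination (-(1:ℂ)/2) * e2
  have hbc : Complex.I * (U 0 1 - U 1 0) = 0 := by linear_combination ((1:ℂ)/2) * e3
  have hb0 : U 0 1 = 0 := by
    rcases mul_eq_zero.mp hbc with h | h
    · exact absurd h Complex.I_ne_zero
    · have hb : U 0 1 = U 1 0 := by linear_combination h
      linear_combination ((1:ℂ)/2) * hb + ((1:ℂ)/2) * hc
  have hc0 : U 1 0 = 0 := by rw [hc, hb0, neg_zero]
  have e31 := congrFun (congrFun c3 0) 1
  simp [Matrix.mul_apply, Fin.sum_univ_two, A₃, hb0] at e31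
  field_simp at e31
  have had : U 0 0 = U 1 1 := e31
  have e11 := congrFun (congrFun c1 1) 1
  simp [Matrix.mul_apply, Fin.sum_univ_two, A₁, hb0, hc0] at e11
  field_simp at e11
  have hd0 : U 1 1 = 0 := by linear_combination ((1:ℂ)/2) * e11
  have ha0 : U 0 0 = 0 := had.trans hd0
  have eU := congrFun (congrFun hUl 0) 0
  simp [Matrix.mul_apply, Fin.sum_univ_two, Matrix.conjTranspose_apply, Matrix.one_apply,
    ha0, hc0] at eU

end Aux

/-- The two inequivalent irreducible unitary representations `ρ₊, ρ₋` of `GL₃(ℤ/3ℤ)` determined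
by the unitary matrices `A₁, A₂, A₃`: the two characteristic polynomials coincide,
`det(z₀I ± z₁A₁ + z₂A₂ + z₃A₃) = z₀² + z₀(z₂ + z₃) − z₁² + z₂² + z₃²`, yet no unitary `U`
conjugates `(A₁, A₂, A₃)` to `(−A₁, A₂, A₃)`. -/
theorem stmt14 :
    (A₁ ∈ Matrix.unitaryGroup (Fin 2) ℂ ∧ A₂ ∈ Matrix.unitaryGroup (Fin 2) ℂ ∧
      A₃ ∈ Matrix.unitaryGroup (Fin 2) ℂ) ∧
    (∀ z₀ z₁ z₂ z₃ : ℂ,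
      (z₀ • (1 : Matrix (Fin 2) (Fin 2) ℂ) + z₁ • A₁ + z₂ • A₂ + z₃ • A₃).det =
        z₀ ^ 2 + z₀ * (z₂ + z₃) - z₁ ^ 2 + z₂ ^ 2 + z₃ ^ 2 ∧
      (z₀ • (1 : Matrix (Fin 2) (Fin 2) ℂ) - z₁ • A₁ + z₂ • A₂ + z₃ • A₃).det =
        z₀ ^ 2 + z₀ * (z₂ + z₃) - z₁ ^ 2 + z₂ ^ 2 + z₃ ^ 2) ∧
    ¬ ∃ U : Matrix (Fin 2) (Fin 2) ℂ, U ∈ Matrix.unitaryGroup (Fin 2) ℂ ∧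
      U * A₁ * Uᴴ = -A₁ ∧ U * A₂ * Uᴴ = A₂ ∧ U * A₃ * Uᴴ = A₃ :=
  ⟨⟨aux_u1, aux_u2, aux_u3⟩, aux_det, aux_no_unitary⟩
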